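/- Let D = {(τ, s) : 0 ≤ s ≤ τ ≤ T}, let K : D → ℝ be continuous, let f : [0, T] → ℝ be continuous, and let α ∈ (0, 1). Then the Volterra integral equation u(τ) = f(τ) + ∫₀^τ (τ - s)^{α - 1} K(τ, s) u(s) ds possesses a unique continuous solution u : [0, T] → ℝ. -/

import Mathlib

open Real MeasureTheory Set intervalIntegral

section VolterraAux

lemma volterra_wi {α : ℝ} (hα : 0 < α) {a b : ℝ} {c : ℝ → ℝ}
    (hc : ContinuousOn c (uIcc a b)) :
    IntervalIntegrable (fun t => t ^ (α - 1) * c t) volume a b :=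
  (intervalIntegral.intervalIntegrable_rpow' (by linarith)).mul_continuousOn hc

lemma volterra_int_rpow {α : ℝ} (hα : 0 < α) (a b : ℝ) :
    ∫ t in a..b, t ^ (α - 1) = (b ^ α - a ^ α) / α := by
  have h := integral_rpow (a := a) (b := b) (Or.inl (by linarith : (-1:ℝ) < α - 1))
  rw [show α - 1 + 1 = α by ring] at h
  exact h

lemma volterra_weak_abs_le {α : ℝ} (hα : 0 < α) {a b : ℝ} (ha : 0 ≤ a) (hab : a ≤ b)
    {c ψ : ℝ → ℝ}
    (hc : ContinuousOn c (Icc a b)) (hψ : ContinuousOn ψ (Icc a b))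
    (h : ∀ t ∈ Icc a b, |c t| ≤ ψ t) :
    |∫ t in a..b, t ^ (α - 1) * c t| ≤ ∫ t in a..b, t ^ (α - 1) * ψ t := by
  have hu : uIcc a b = Icc a b := uIcc_of_le hab
  have i1 : IntervalIntegrable (fun t => t ^ (α - 1) * c t) volume a b := volterra_wi hα (hu ▸ hc)
  have i2 : IntervalIntegrable (fun t => t ^ (α - 1) * ψ t) volume a b := volterra_wi hα (hu ▸ hψ)
  calc |∫ t in a..b, t ^ (α - 1) * c t|
      ≤ ∫ t in a..b, |t ^ (α - 1) * c t| := by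
        simpa only [Real.norm_eq_abs] using intervalIntegral.norm_integral_le_integral_norm
          (f := fun t => t ^ (α - 1) * c t) hab
    _ ≤ ∫ t in a..b, t ^ (α - 1) * ψ t := by
        apply intervalIntegral.integral_mono_on hab i1.abs i2
        intro t ht
        have h0 : (0:ℝ) ≤ t ^ (α - 1) := Real.rpow_nonneg (ha.trans ht.1) _
        rw [abs_mul, abs_of_nonneg h0]
        exact mul_le_mul_of_nonneg_left (h t ht) h0

lemma volterra_expint {α lam δ T : ℝ} (hα : 0 < α) (hlam : 0 ≤ lam) (hδ : 0 < δ) (hT : 0 ≤ T)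
    {τ : ℝ} (hτ0 : 0 ≤ τ) (hτT : τ ≤ T) :
    ∫ t in (0:ℝ)..τ, t ^ (α - 1) * exp (-(lam * t)) ≤
      δ ^ α / α + exp (-(lam * δ)) * (T ^ α / α) := by
  have hconte : Continuous (fun t : ℝ => exp (-(lam * t))) := by continuity
  have hint : ∀ a b : ℝ, IntervalIntegrable (fun t => t ^ (α - 1) * exp (-(lam * t))) volume a b :=
    fun a b => volterra_wi hα hconte.continuousOn
  have hone : ∀ a b : ℝ, IntervalIntegrable (fun t : ℝ => t ^ (α - 1) * 1) volume a b :=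
    fun a b => volterra_wi hα continuousOn_const
  have hmono1 : ∀ a b : ℝ, 0 ≤ a → a ≤ b →
      ∫ t in a..b, t ^ (α - 1) * exp (-(lam * t)) ≤ ∫ t in a..b, t ^ (α - 1) * 1 := by
    intro a b ha hab
    apply intervalIntegral.integral_mono_on hab (hint a b) (hone a b)
    intro t ht
    have : exp (-(lam * t)) ≤ 1 := by
      rw [exp_le_one_iff]
      have := mul_nonneg hlam (ha.trans ht.1)
      linarith
    exact mul_le_mul_of_nonneg_left this (Real.rpow_nonneg (ha.trans ht.1) _)
  rcases le_or_gt τ δ with hc | hc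
  · have h2 : ∫ t in (0:ℝ)..τ, t ^ (α - 1) * 1 = τ ^ α / α := by
      simp only [mul_one, volterra_int_rpow hα]
      rw [Real.zero_rpow hα.ne']; ring
    have h3 : τ ^ α ≤ δ ^ α := Real.rpow_le_rpow hτ0 hc hα.le
    calc ∫ t in (0:ℝ)..τ, t ^ (α - 1) * exp (-(lam * t))
        ≤ τ ^ α / α := (hmono1 0 τ le_rfl hτ0).trans_eq h2
      _ ≤ δ ^ α / α := by gcongr
      _ ≤ δ ^ α / α + exp (-(lam * δ)) * (T ^ α / α) := by
          have : (0:ℝ) ≤ exp (-(lam * δ)) * (T ^ α / α) := by positivity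
          linarith
  · have hsplit : ∫ t in (0:ℝ)..τ, t ^ (α - 1) * exp (-(lam * t)) =
        (∫ t in (0:ℝ)..δ, t ^ (α - 1) * exp (-(lam * t))) +
        ∫ t in δ..τ, t ^ (α - 1) * exp (-(lam * t)) :=
      (intervalIntegral.integral_add_adjacent_intervals (hint 0 δ) (hint δ τ)).symm
    have h1 : ∫ t in (0:ℝ)..δ, t ^ (α - 1) * exp (-(lam * t)) ≤ δ ^ α / α := by
      refine (hmono1 0 δ le_rfl hδ.le).trans_eq ?_
      simp only [mul_one, volterra_int_rpow hα]
      rw [Real.zero_rpow hα.ne']; ring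
    have h2 : ∫ t in δ..τ, t ^ (α - 1) * exp (-(lam * t)) ≤ exp (-(lam * δ)) * (T ^ α / α) := by
      have hc2 : ∫ t in δ..τ, t ^ (α - 1) * exp (-(lam * t)) ≤
          ∫ t in δ..τ, t ^ (α - 1) * exp (-(lam * δ)) := by
        apply intervalIntegral.integral_mono_on hc.le (hint δ τ)
          (volterra_wi hα continuousOn_const)
        intro t ht
        have ht0 : (0:ℝ) ≤ t := hδ.le.trans ht.1
        have : exp (-(lam * t)) ≤ exp (-(lam * δ)) := by
          apply exp_le_exp.2
          have := mul_le_mul_of_nonneg_left ht.1 hlam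
          linarith
        exact mul_le_mul_of_nonneg_left this (Real.rpow_nonneg ht0 _)
      have hc3 : ∫ t in δ..τ, t ^ (α - 1) * exp (-(lam * δ)) =
          exp (-(lam * δ)) * ((τ ^ α - δ ^ α) / α) := by
        rw [intervalIntegral.integral_mul_const, volterra_int_rpow hα]; ring
      have hc4 : (τ ^ α - δ ^ α) / α ≤ T ^ α / α := by
        have h5 : τ ^ α ≤ T ^ α := Real.rpow_le_rpow hτ0 hτT hα.le
        have h6 : (0:ℝ) ≤ δ ^ α := Real.rpow_nonneg hδ.le _
        gcongr
        linarith
      calc ∫ t in δ..τ, t ^ (α - 1) * exp (-(lam * t))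
          ≤ exp (-(lam * δ)) * ((τ ^ α - δ ^ α) / α) := hc2.trans_eq hc3
        _ ≤ exp (-(lam * δ)) * (T ^ α / α) := mul_le_mul_of_nonneg_left hc4 (exp_pos _).le
    rw [hsplit]
    exact add_le_add h1 h2

lemma volterra_cont_F {T α : ℝ} (hT : 0 ≤ T) (hα : 0 < α) {g : ℝ × ℝ → ℝ} (hg : Continuous g)
    {M : ℝ} (hM : 0 < M) (hMb : ∀ p ∈ Icc (0:ℝ) T ×ˢ Icc (0:ℝ) T, |g p| ≤ M) :
    ContinuousOn (fun τ => ∫ t in (0:ℝ)..τ, t ^ (α - 1) * g (τ, τ - t)) (Icc 0 T) := by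
  set F := fun τ => ∫ t in (0:ℝ)..τ, t ^ (α - 1) * g (τ, τ - t) with hF
  have hgt : ∀ x : ℝ, Continuous fun t : ℝ => g (x, x - t) := fun x =>
    hg.comp (continuous_const.prodMk (continuous_const.sub continuous_id))
  have est : ∀ a b : ℝ, 0 ≤ a → a ≤ b → b ≤ T → ∀ ε₁ : ℝ, 0 ≤ ε₁ →
      (∀ t ∈ Icc 0 a, |g (b, b - t) - g (a, a - t)| ≤ ε₁) →
      |F b - F a| ≤ ε₁ * (T ^ α / α) + M * ((b ^ α - a ^ α) / α) := by
    intro a b ha hab hbT ε₁ hε₁ hclose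
    have iGb1 : IntervalIntegrable (fun t => t ^ (α - 1) * g (b, b - t)) volume 0 a :=
      volterra_wi hα (hgt b).continuousOn
    have iGb2 : IntervalIntegrable (fun t => t ^ (α - 1) * g (b, b - t)) volume a b :=
      volterra_wi hα (hgt b).continuousOn
    have iGa : IntervalIntegrable (fun t => t ^ (α - 1) * g (a, a - t)) volume 0 a :=
      volterra_wi hα (hgt a).continuousOn
    have hsplit : F b = (∫ t in (0:ℝ)..a, t ^ (α - 1) * g (b, b - t)) +
        ∫ t in a..b, t ^ (α - 1) * g (b, b - t) :=
      (intervalIntegral.integral_add_adjacent_intervals iGb1 iGb2).symm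
    have hdiff : (∫ t in (0:ℝ)..a, t ^ (α - 1) * (g (b, b - t) - g (a, a - t))) =
        (∫ t in (0:ℝ)..a, t ^ (α - 1) * g (b, b - t)) -
          ∫ t in (0:ℝ)..a, t ^ (α - 1) * g (a, a - t) := by
      rw [← intervalIntegral.integral_sub iGb1 iGa]
      simp only [mul_sub]
    have hT1 : |∫ t in (0:ℝ)..a, t ^ (α - 1) * (g (b, b - t) - g (a, a - t))| ≤
        ε₁ * (T ^ α / α) := by
      have := volterra_weak_abs_le hα (le_refl (0:ℝ)) ha
        (c := fun t => g (b, b - t) - g (a, a - t)) (ψ := fun _ => ε₁)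
        (((hgt b).sub (hgt a)).continuousOn) continuousOn_const hclose
      have hval : (∫ t in (0:ℝ)..a, t ^ (α - 1) * ε₁) = ε₁ * (a ^ α / α) := by
        rw [intervalIntegral.integral_mul_const, volterra_int_rpow hα, Real.zero_rpow hα.ne']
        ring
      refine this.trans (hval ▸ ?_)
      have haT : a ^ α ≤ T ^ α := Real.rpow_le_rpow ha (hab.trans hbT) hα.le
      have : a ^ α / α ≤ T ^ α / α := by gcongr
      exact mul_le_mul_of_nonneg_left this hε₁
    have hT2 : |∫ t in a..b, t ^ (α - 1) * g (b, b - t)| ≤ M * ((b ^ α - a ^ α) / α) := by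
      have hb : ∀ t ∈ Icc a b, |g (b, b - t)| ≤ M := by
        intro t ht
        apply hMb
        refine ⟨⟨ha.trans hab, hbT⟩, ⟨?_, ?_⟩⟩
        · simp only []
          have : t ≤ b := ht.2
          linarith
        · simp only []
          have : 0 ≤ t := ha.trans ht.1
          linarith [hab.trans hbT]
      have := volterra_weak_abs_le hα ha hab (c := fun t => g (b, b - t)) (ψ := fun _ => M)
        ((hgt b).continuousOn) continuousOn_const hb
      have hval : (∫ t in a..b, t ^ (α - 1) * M) = M * ((b ^ α - a ^ α) / α) := by
        rw [intervalIntegral.integral_mul_const, volterra_int_rpow hα]; ring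
      exact this.trans_eq hval
    calc |F b - F a| = |(∫ t in (0:ℝ)..a, t ^ (α - 1) * (g (b, b - t) - g (a, a - t))) +
          ∫ t in a..b, t ^ (α - 1) * g (b, b - t)| := by
          have hFa : F a = ∫ t in (0:ℝ)..a, t ^ (α - 1) * g (a, a - t) := rfl
          rw [hsplit, hFa, hdiff]
          congr 1
          ring
      _ ≤ _ := (abs_add_le _ _).trans (add_le_add hT1 hT2)
  have huc : UniformContinuousOn g (Icc (0:ℝ) T ×ˢ Icc (0:ℝ) T) :=
    (isCompact_Icc.prod isCompact_Icc).uniformContinuousOn_of_continuous hg.continuousOn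
  rw [Metric.continuousOn_iff]
  intro τ₀ hτ₀ ε hε
  have hTα1 : (0:ℝ) < T ^ α + 1 := by positivity
  set ε₁ := ε * α / (2 * (T ^ α + 1)) with hε₁def
  have hε₁ : 0 < ε₁ := by positivity
  obtain ⟨η, hη, hηc⟩ := (Metric.uniformContinuousOn_iff).1 huc ε₁ hε₁
  set ε₂ := ε * α / (2 * M) with hε₂def
  have hε₂ : 0 < ε₂ := by positivity
  have hcr : ContinuousAt (fun x : ℝ => x ^ α) τ₀ :=
    Real.continuousAt_rpow_const τ₀ α (Or.inr hα.le)
  obtain ⟨δ₂, hδ₂, hδ₂c⟩ := Metric.continuousAt_iff.1 hcr ε₂ hε₂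
  refine ⟨min η δ₂, lt_min hη hδ₂, fun τ hτ hd => ?_⟩
  rw [Real.dist_eq] at hd
  have hdη : |τ - τ₀| < η := lt_of_lt_of_le hd (min_le_left _ _)
  have hdδ₂ : dist τ τ₀ < δ₂ := by rw [Real.dist_eq]; exact lt_of_lt_of_le hd (min_le_right _ _)
  have hpow := hδ₂c hdδ₂
  rw [Real.dist_eq] at hpow
  have main : ∀ a b : ℝ, a ∈ Icc (0:ℝ) T → b ∈ Icc (0:ℝ) T → a ≤ b → |b - a| < η →
      |b ^ α - a ^ α| < ε₂ → |F b - F a| < ε := by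
    intro a b haI hbI hab habη habp
    have hclose : ∀ t ∈ Icc (0:ℝ) a, |g (b, b - t) - g (a, a - t)| ≤ ε₁ := by
      intro t ht
      have htb : (b, b - t) ∈ Icc (0:ℝ) T ×ˢ Icc (0:ℝ) T :=
        ⟨hbI, ⟨by have := ht.2; simp only []; linarith,
          by have := ht.1; simp only []; linarith [hbI.2]⟩⟩
      have hta : (a, a - t) ∈ Icc (0:ℝ) T ×ˢ Icc (0:ℝ) T :=
        ⟨haI, ⟨by have := ht.2; simp only []; linarith,
          by have := ht.1; simp only []; linarith [haI.2]⟩⟩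
      have hdist : dist ((b : ℝ), b - t) ((a : ℝ), a - t) < η := by
        rw [Prod.dist_eq]
        simp only [Real.dist_eq]
        have : b - t - (a - t) = b - a := by ring
        rw [this]
        exact max_lt habη habη
      have := hηc _ htb _ hta hdist
      rw [Real.dist_eq] at this
      exact this.le
    have h1 := est a b haI.1 hab hbI.2 ε₁ hε₁.le hclose
    have hba : b ^ α - a ^ α = |b ^ α - a ^ α| :=
      (abs_of_nonneg (by linarith [Real.rpow_le_rpow haI.1 hab hα.le])).symm
    have hb1 : ε₁ * (T ^ α / α) ≤ ε / 2 := by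
      rw [hε₁def, div_mul_eq_mul_div]
      have e1 : ε * α * (T ^ α / α) = ε * T ^ α := by field_simp
      rw [e1, div_le_div_iff₀ (by positivity) (by norm_num : (0:ℝ) < 2)]
      nlinarith [Real.rpow_nonneg hT α]
    have hb2 : M * ((b ^ α - a ^ α) / α) < ε / 2 := by
      have hlt : b ^ α - a ^ α < ε₂ := hba ▸ habp
      have : M * ((b ^ α - a ^ α) / α) < M * (ε₂ / α) := by
        apply mul_lt_mul_of_pos_left _ hM
        exact div_lt_div_of_pos_right hlt hα
      refine this.trans_le (le_of_eq ?_)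
      rw [hε₂def]
      field_simp
    linarith
  rcases le_total τ₀ τ with hle | hle
  · rw [Real.dist_eq]
    exact main τ₀ τ hτ₀ hτ hle hdη hpow
  · rw [Real.dist_eq, abs_sub_comm]
    exact main τ τ₀ hτ hτ₀ hle
      (by rw [abs_sub_comm] at hdη; exact hdη) (by rw [abs_sub_comm] at hpow; exact hpow)

/-- package a `ContinuousOn` function as a continuous map on the interval -/
def volterra_mk {T : ℝ} (F : ℝ → ℝ) (hF : ContinuousOn F (Icc 0 T)) : C(Icc (0:ℝ) T, ℝ) :=
  ⟨(Icc (0:ℝ) T).restrict F, hF.restrict⟩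

@[simp] lemma volterra_mk_apply {T : ℝ} (F : ℝ → ℝ) (hF : ContinuousOn F (Icc 0 T))
    (x : Icc (0:ℝ) T) : volterra_mk F hF x = F x := rfl

end VolterraAux

lemma volterra_main {T : ℝ} (hT : 0 ≤ T) {α : ℝ} (hα0 : 0 < α)
    {g : ℝ × ℝ → ℝ} (hg : Continuous g) {f : ℝ → ℝ} (hf : ContinuousOn f (Icc 0 T)) :
    ∃ u : ℝ → ℝ,
      (ContinuousOn u (Icc 0 T) ∧
        ∀ τ ∈ Icc (0:ℝ) T,
          u τ = f τ + ∫ s in (0:ℝ)..τ, (τ - s) ^ (α - 1) * g (τ, s) * u s) ∧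
      ∀ v : ℝ → ℝ,
        (ContinuousOn v (Icc 0 T) ∧
          ∀ τ ∈ Icc (0:ℝ) T,
            v τ = f τ + ∫ s in (0:ℝ)..τ, (τ - s) ^ (α - 1) * g (τ, s) * v s) →
        EqOn u v (Icc 0 T) := by
  obtain ⟨C, hC⟩ := (isCompact_Icc.prod isCompact_Icc).exists_bound_of_continuousOn
    hg.continuousOn
  set M := |C| + 1 with hMdef
  have hM : 0 < M := by positivity
  have hMb : ∀ p ∈ Icc (0:ℝ) T ×ˢ Icc (0:ℝ) T, |g p| ≤ M := by
    intro p hp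
    have h1 := hC p hp
    rw [Real.norm_eq_abs] at h1
    have h2 := le_abs_self C
    rw [hMdef]; linarith
  set δ := (α / (4 * M)) ^ α⁻¹ with hδdef
  have hδ : 0 < δ := Real.rpow_pos_of_pos (by positivity) _
  have hδα : M * (δ ^ α / α) = 1 / 4 := by
    rw [hδdef, Real.rpow_inv_rpow (by positivity) hα0.ne']
    field_simp
  have hTα : (0:ℝ) ≤ T ^ α := Real.rpow_nonneg hT _
  set Cg := M * (T ^ α / α) with hCgdef
  have hCg : 0 ≤ Cg := by rw [hCgdef]; positivity
  set lam := Real.log (4 * (Cg + 1)) / δ with hlamdef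
  have h4Cg : (1:ℝ) < 4 * (Cg + 1) := by nlinarith
  have hlam : 0 ≤ lam := div_nonneg (Real.log_nonneg h4Cg.le) hδ.le
  have hexp : exp (-(lam * δ)) = 1 / (4 * (Cg + 1)) := by
    rw [hlamdef, div_mul_cancel₀ _ hδ.ne', Real.exp_neg, Real.exp_log (by linarith), one_div]
  have hexpCg : M * (exp (-(lam * δ)) * (T ^ α / α)) ≤ 1 / 4 := by
    rw [hexp]
    have he : M * (1 / (4 * (Cg + 1)) * (T ^ α / α)) = Cg / (4 * (Cg + 1)) := by
      rw [hCgdef]; ring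
    rw [he, div_le_div_iff₀ (by linarith) (by norm_num : (0:ℝ) < 4)]
    linarith
  have hbound : M * (δ ^ α / α + exp (-(lam * δ)) * (T ^ α / α)) ≤ 1 / 2 := by
    rw [mul_add]; linarith
  -- substitution lemma
  have key : ∀ (H : ℝ × ℝ → ℝ) (τ : ℝ),
      (∫ s in (0:ℝ)..τ, (τ - s) ^ (α - 1) * H (τ, s)) =
        ∫ t in (0:ℝ)..τ, t ^ (α - 1) * H (τ, τ - t) := by
    intro H τ
    have h := intervalIntegral.integral_comp_sub_left (a := (0:ℝ)) (b := τ)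
      (fun x => x ^ (α - 1) * H (τ, τ - x)) τ
    simp only [sub_self, sub_zero, sub_sub_cancel] at h
    exact h
  have key2 : ∀ (q : ℝ → ℝ) (τ : ℝ),
      (∫ s in (0:ℝ)..τ, (τ - s) ^ (α - 1) * (g (τ, s) * q s)) =
        ∫ t in (0:ℝ)..τ, t ^ (α - 1) * (g (τ, τ - t) * q (τ - t)) := by
    intro q τ
    simpa using key (fun p => g p * q p.2) τ
  -- continuity of the integral operator
  have hIcont : ∀ q : ℝ → ℝ, Continuous q →
      ContinuousOn (fun τ => ∫ s in (0:ℝ)..τ, (τ - s) ^ (α - 1) * (g (τ, s) * q s))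
        (Icc 0 T) := by
    intro q hqc
    have hHc : Continuous fun p : ℝ × ℝ => g p * q p.2 := hg.mul (hqc.comp continuous_snd)
    obtain ⟨Cq, hCq⟩ := (isCompact_Icc.prod isCompact_Icc).exists_bound_of_continuousOn
      hHc.continuousOn
    have heq : (fun τ => ∫ s in (0:ℝ)..τ, (τ - s) ^ (α - 1) * (g (τ, s) * q s)) =
        fun τ => ∫ t in (0:ℝ)..τ, t ^ (α - 1) * (fun p : ℝ × ℝ => g p * q p.2) (τ, τ - t) := by
      funext τ
      simpa using key2 q τ
    rw [heq]
    apply volterra_cont_F hT hα0 hHc (M := |Cq| + 1) (by positivity)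
    intro p hp
    have h1 := hCq p hp
    rw [Real.norm_eq_abs] at h1
    have h2 := le_abs_self Cq
    linarith
  have hq : ∀ w : C(Icc (0:ℝ) T, ℝ), Continuous fun s : ℝ => exp (lam * s) * IccExtend hT w s :=
    fun w => (Real.continuous_exp.comp (continuous_const.mul continuous_id)).mul
      (map_continuous w).Icc_extend'
  have hΦc : ∀ w : C(Icc (0:ℝ) T, ℝ), ContinuousOn (fun τ =>
      exp (-(lam * τ)) * (f τ + ∫ s in (0:ℝ)..τ,
        (τ - s) ^ (α - 1) * (g (τ, s) * (exp (lam * s) * IccExtend hT w s)))) (Icc 0 T) :=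
    fun w => ((Real.continuous_exp.comp
      (continuous_const.mul continuous_id).neg).continuousOn).mul
      (hf.add (hIcont _ (hq w)))
  let Sc : C(Icc (0:ℝ) T, ℝ) → C(Icc (0:ℝ) T, ℝ) := fun w => volterra_mk _ (hΦc w)
  -- generic contraction estimate
  have hest : ∀ q₁ q₂ : ℝ → ℝ, Continuous q₁ → Continuous q₂ → ∀ D : ℝ, 0 ≤ D →
      (∀ s : ℝ, |q₁ s - q₂ s| ≤ exp (lam * s) * D) →
      ∀ τ : ℝ, 0 ≤ τ → τ ≤ T →
      |(∫ s in (0:ℝ)..τ, (τ - s) ^ (α - 1) * (g (τ, s) * q₁ s)) -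
        ∫ s in (0:ℝ)..τ, (τ - s) ^ (α - 1) * (g (τ, s) * q₂ s)| ≤
        exp (lam * τ) * (D * (1 / 2)) := by
    intro q₁ q₂ hq₁ hq₂ D hD hqd τ hτ0 hτT
    rw [key2 q₁ τ, key2 q₂ τ]
    have hc1 : Continuous fun t : ℝ => g (τ, τ - t) * q₁ (τ - t) :=
      (hg.comp (continuous_const.prodMk (continuous_const.sub continuous_id))).mul
        (hq₁.comp (continuous_const.sub continuous_id))
    have hc2 : Continuous fun t : ℝ => g (τ, τ - t) * q₂ (τ - t) :=
      (hg.comp (continuous_const.prodMk (continuous_const.sub continuous_id))).mul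
        (hq₂.comp (continuous_const.sub continuous_id))
    rw [← intervalIntegral.integral_sub (volterra_wi hα0 hc1.continuousOn)
      (volterra_wi hα0 hc2.continuousOn)]
    have hre : (∫ t in (0:ℝ)..τ, (t ^ (α - 1) * (g (τ, τ - t) * q₁ (τ - t)) -
        t ^ (α - 1) * (g (τ, τ - t) * q₂ (τ - t)))) =
        ∫ t in (0:ℝ)..τ, t ^ (α - 1) *
          (g (τ, τ - t) * q₁ (τ - t) - g (τ, τ - t) * q₂ (τ - t)) := by
      congr 1; funext t; ring
    rw [hre]
    have hmaj : ∀ t ∈ Icc (0:ℝ) τ,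
        |g (τ, τ - t) * q₁ (τ - t) - g (τ, τ - t) * q₂ (τ - t)| ≤
          M * (D * exp (lam * τ)) * exp (-(lam * t)) := by
      intro t ht
      have hmem : (τ, τ - t) ∈ Icc (0:ℝ) T ×ˢ Icc (0:ℝ) T := by
        refine ⟨⟨hτ0, hτT⟩, ⟨?_, ?_⟩⟩
        · simp only []; linarith [ht.2]
        · simp only []; linarith [ht.1]
      have h1 : |g (τ, τ - t)| ≤ M := hMb _ hmem
      have h2 := hqd (τ - t)
      have h3 : exp (lam * (τ - t)) = exp (lam * τ) * exp (-(lam * t)) := by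
        rw [← Real.exp_add]; congr 1; ring
      calc |g (τ, τ - t) * q₁ (τ - t) - g (τ, τ - t) * q₂ (τ - t)|
          = |g (τ, τ - t)| * |q₁ (τ - t) - q₂ (τ - t)| := by rw [← mul_sub, abs_mul]
        _ ≤ M * (exp (lam * (τ - t)) * D) := by
            apply mul_le_mul h1 _ (abs_nonneg _) hM.le
            calc |q₁ (τ - t) - q₂ (τ - t)| ≤ exp (lam * (τ - t)) * D := h2
              _ = exp (lam * (τ - t)) * D := rfl
        _ = M * (D * exp (lam * τ)) * exp (-(lam * t)) := by rw [h3]; ring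
    have habs := volterra_weak_abs_le hα0 (le_refl (0:ℝ)) hτ0
      (c := fun t => g (τ, τ - t) * q₁ (τ - t) - g (τ, τ - t) * q₂ (τ - t))
      (ψ := fun t => M * (D * exp (lam * τ)) * exp (-(lam * t)))
      (hc1.sub hc2).continuousOn
      (continuous_const.mul
        (Real.continuous_exp.comp (continuous_const.mul continuous_id).neg)).continuousOn hmaj
    refine habs.trans ?_
    have hre2 : (∫ t in (0:ℝ)..τ, t ^ (α - 1) *
        (M * (D * exp (lam * τ)) * exp (-(lam * t)))) =
        M * (D * exp (lam * τ)) * ∫ t in (0:ℝ)..τ, t ^ (α - 1) * exp (-(lam * t)) := by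
      rw [← intervalIntegral.integral_const_mul]
      congr 1; funext t; ring
    rw [hre2]
    have hei := volterra_expint hα0 hlam hδ hT hτ0 hτT
    calc M * (D * exp (lam * τ)) * ∫ t in (0:ℝ)..τ, t ^ (α - 1) * exp (-(lam * t))
        ≤ M * (D * exp (lam * τ)) * (δ ^ α / α + exp (-(lam * δ)) * (T ^ α / α)) := by
          apply mul_le_mul_of_nonneg_left hei (by positivity)
      _ = (D * exp (lam * τ)) * (M * (δ ^ α / α + exp (-(lam * δ)) * (T ^ α / α))) := by ring
      _ ≤ (D * exp (lam * τ)) * (1 / 2) := by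
          apply mul_le_mul_of_nonneg_left hbound (by positivity)
      _ = exp (lam * τ) * (D * (1 / 2)) := by ring
  -- contraction
  have hcontr : ∀ w₁ w₂ : C(Icc (0:ℝ) T, ℝ),
      dist (Sc w₁) (Sc w₂) ≤ (1 / 2 : ℝ) * dist w₁ w₂ := by
    intro w₁ w₂
    have hD0 : (0:ℝ) ≤ dist w₁ w₂ := dist_nonneg
    rw [ContinuousMap.dist_le (by positivity)]
    rintro ⟨τ, hτ0, hτT⟩
    show dist
      (exp (-(lam * τ)) * (f τ + ∫ s in (0:ℝ)..τ,
        (τ - s) ^ (α - 1) * (g (τ, s) * (exp (lam * s) * IccExtend hT w₁ s))))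
      (exp (-(lam * τ)) * (f τ + ∫ s in (0:ℝ)..τ,
        (τ - s) ^ (α - 1) * (g (τ, s) * (exp (lam * s) * IccExtend hT w₂ s)))) ≤
      1 / 2 * dist w₁ w₂
    rw [Real.dist_eq]
    have hfac : exp (-(lam * τ)) * (f τ + ∫ s in (0:ℝ)..τ,
        (τ - s) ^ (α - 1) * (g (τ, s) * (exp (lam * s) * IccExtend hT w₁ s))) -
        exp (-(lam * τ)) * (f τ + ∫ s in (0:ℝ)..τ,
        (τ - s) ^ (α - 1) * (g (τ, s) * (exp (lam * s) * IccExtend hT w₂ s))) =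
        exp (-(lam * τ)) * ((∫ s in (0:ℝ)..τ,
        (τ - s) ^ (α - 1) * (g (τ, s) * (exp (lam * s) * IccExtend hT w₁ s))) -
        ∫ s in (0:ℝ)..τ,
        (τ - s) ^ (α - 1) * (g (τ, s) * (exp (lam * s) * IccExtend hT w₂ s))) := by ring
    rw [hfac, abs_mul, abs_of_pos (exp_pos _)]
    have hqd : ∀ s : ℝ, |(fun s => exp (lam * s) * IccExtend hT w₁ s) s -
        (fun s => exp (lam * s) * IccExtend hT w₂ s) s| ≤ exp (lam * s) * dist w₁ w₂ := by
      intro s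
      simp only []
      rw [← mul_sub, abs_mul, abs_of_pos (exp_pos _)]
      apply mul_le_mul_of_nonneg_left _ (exp_pos _).le
      rw [IccExtend_apply, IccExtend_apply, ← Real.dist_eq]
      exact ContinuousMap.dist_apply_le_dist _
    have h := hest _ _ (hq w₁) (hq w₂) (dist w₁ w₂) hD0 hqd τ hτ0 hτT
    calc exp (-(lam * τ)) * |(∫ s in (0:ℝ)..τ,
          (τ - s) ^ (α - 1) * (g (τ, s) * (exp (lam * s) * IccExtend hT w₁ s))) -
          ∫ s in (0:ℝ)..τ,
          (τ - s) ^ (α - 1) * (g (τ, s) * (exp (lam * s) * IccExtend hT w₂ s))|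
        ≤ exp (-(lam * τ)) * (exp (lam * τ) * (dist w₁ w₂ * (1 / 2))) := by
          apply mul_le_mul_of_nonneg_left h (exp_pos _).le
      _ = (exp (-(lam * τ)) * exp (lam * τ)) * (dist w₁ w₂ * (1 / 2)) := by ring
      _ = 1 / 2 * dist w₁ w₂ := by
          rw [← Real.exp_add]
          simp only [neg_add_cancel, Real.exp_zero]
          ring
  have hSc : ContractingWith (1 / 2 : NNReal) Sc := by
    constructor
    · rw [← NNReal.coe_lt_coe]
      push_cast
      norm_num
    · apply LipschitzWith.of_dist_le_mul
      intro x y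
      have : ((1 / 2 : NNReal) : ℝ) = 1 / 2 := by norm_num
      rw [this]
      exact hcontr x y
  have hne : Nonempty (Icc (0:ℝ) T) := ⟨⟨0, le_refl 0, hT⟩⟩
  let uc : C(Icc (0:ℝ) T, ℝ) := ContractingWith.fixedPoint Sc hSc
  have hfix : Sc uc = uc := hSc.fixedPoint_isFixedPt
  refine ⟨fun τ => exp (lam * τ) * IccExtend hT uc τ, ⟨?_, ?_⟩, ?_⟩
  · exact ((Real.continuous_exp.comp (continuous_const.mul continuous_id)).mul
      (map_continuous uc).Icc_extend').continuousOn
  · intro τ hτ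
    show exp (lam * τ) * IccExtend hT (⇑uc) τ = f τ + ∫ s in (0:ℝ)..τ,
      (τ - s) ^ (α - 1) * g (τ, s) * (exp (lam * s) * IccExtend hT (⇑uc) s)
    rw [IccExtend_of_mem hT _ hτ]
    have h5 : (uc ⟨τ, hτ⟩ : ℝ) = exp (-(lam * τ)) * (f τ + ∫ s in (0:ℝ)..τ,
        (τ - s) ^ (α - 1) * (g (τ, s) * (exp (lam * s) * IccExtend hT (⇑uc) s))) := by
      conv_lhs => rw [← hfix]
      rfl
    rw [h5]
    have h4 : (∫ s in (0:ℝ)..τ,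
        (τ - s) ^ (α - 1) * g (τ, s) * (exp (lam * s) * IccExtend hT (⇑uc) s)) =
        ∫ s in (0:ℝ)..τ,
        (τ - s) ^ (α - 1) * (g (τ, s) * (exp (lam * s) * IccExtend hT (⇑uc) s)) := by
      congr 1; funext s; ring
    rw [h4, ← mul_assoc, ← Real.exp_add]
    simp only [add_neg_cancel, Real.exp_zero, one_mul]
  · rintro v ⟨hvc, hveq⟩
    have hvc' : ContinuousOn (fun τ => exp (-(lam * τ)) * v τ) (Icc 0 T) :=
      ((Real.continuous_exp.comp (continuous_const.mul continuous_id).neg).continuousOn).mul hvc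
    have hfixv : Sc (volterra_mk _ hvc') = volterra_mk _ hvc' := by
      ext x
      obtain ⟨τ, hτ⟩ := x
      show exp (-(lam * τ)) * (f τ + ∫ s in (0:ℝ)..τ, (τ - s) ^ (α - 1) *
          (g (τ, s) * (exp (lam * s) * IccExtend hT (⇑(volterra_mk _ hvc')) s))) =
        exp (-(lam * τ)) * v τ
      have hτ0 : 0 ≤ τ := hτ.1
      have hIeq : (∫ s in (0:ℝ)..τ, (τ - s) ^ (α - 1) *
          (g (τ, s) * (exp (lam * s) * IccExtend hT (⇑(volterra_mk _ hvc')) s))) =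
          ∫ s in (0:ℝ)..τ, (τ - s) ^ (α - 1) * g (τ, s) * v s := by
        apply intervalIntegral.integral_congr
        intro s hs
        rw [uIcc_of_le hτ0] at hs
        have hsT : s ∈ Icc (0:ℝ) T := ⟨hs.1, hs.2.trans hτ.2⟩
        have hIE : IccExtend hT (⇑(volterra_mk _ hvc')) s = exp (-(lam * s)) * v s := by
          rw [IccExtend_of_mem hT _ hsT]
          rfl
        show (τ - s) ^ (α - 1) * (g (τ, s) * (exp (lam * s) *
            IccExtend hT (⇑(volterra_mk _ hvc')) s)) =
          (τ - s) ^ (α - 1) * g (τ, s) * v s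
        rw [hIE]
        have hc : exp (lam * s) * (exp (-(lam * s)) * v s) = v s := by
          rw [← mul_assoc, ← Real.exp_add]
          simp only [add_neg_cancel, Real.exp_zero, one_mul]
        rw [hc]
        ring
      rw [hIeq, ← hveq τ hτ]
    have huv : (volterra_mk _ hvc' : C(Icc (0:ℝ) T, ℝ)) = uc :=
      hSc.fixedPoint_unique hfixv
    intro τ hτ
    show exp (lam * τ) * IccExtend hT (⇑uc) τ = v τ
    rw [IccExtend_of_mem hT _ hτ]
    have : (uc ⟨τ, hτ⟩ : ℝ) = exp (-(lam * τ)) * v τ := by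
      rw [← huv]; rfl
    rw [this, ← mul_assoc, ← Real.exp_add]
    simp only [add_neg_cancel, Real.exp_zero, one_mul]

theorem volterra_weakly_singular_existence_uniqueness (T : ℝ) (hT : 0 ≤ T)
    (K : ℝ → ℝ → ℝ)
    (hK : ContinuousOn (fun p : ℝ × ℝ => K p.1 p.2)
      {p : ℝ × ℝ | 0 ≤ p.2 ∧ p.2 ≤ p.1 ∧ p.1 ≤ T})
    (f : ℝ → ℝ) (hf : ContinuousOn f (Icc 0 T))
    (α : ℝ) (hα : α ∈ Ioo (0:ℝ) 1) :
    ∃ u : ℝ → ℝ,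
      (ContinuousOn u (Icc 0 T) ∧
        ∀ τ ∈ Icc (0:ℝ) T,
          u τ = f τ + ∫ s in (0:ℝ)..τ, (τ - s) ^ (α - 1) * K τ s * u s) ∧
      ∀ v : ℝ → ℝ,
        (ContinuousOn v (Icc 0 T) ∧
          ∀ τ ∈ Icc (0:ℝ) T,
            v τ = f τ + ∫ s in (0:ℝ)..τ, (τ - s) ^ (α - 1) * K τ s * v s) →
        EqOn u v (Icc 0 T) := by
  set D : Set (ℝ × ℝ) := {p : ℝ × ℝ | 0 ≤ p.2 ∧ p.2 ≤ p.1 ∧ p.1 ≤ T} with hDdef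
  have hD : IsClosed D := by
    have h1 : IsClosed {p : ℝ × ℝ | 0 ≤ p.2} := isClosed_le continuous_const continuous_snd
    have h2 : IsClosed {p : ℝ × ℝ | p.2 ≤ p.1} := isClosed_le continuous_snd continuous_fst
    have h3 : IsClosed {p : ℝ × ℝ | p.1 ≤ T} := isClosed_le continuous_fst continuous_const
    exact h1.inter (h2.inter h3)
  obtain ⟨gext, hgext⟩ := ContinuousMap.exists_restrict_eq (X := ℝ × ℝ) (Y := ℝ) hD
    ⟨D.restrict (fun p => K p.1 p.2), hK.restrict⟩
  have hgK : ∀ p ∈ D, gext p = K p.1 p.2 := by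
    intro p hp
    have := congrArg (fun F : C(D, ℝ) => F ⟨p, hp⟩) hgext
    exact this
  have hgc : Continuous (⇑gext) := map_continuous gext
  -- the integral with gext agrees with the one with K for τ ∈ [0, T]
  have hsame : ∀ (w : ℝ → ℝ) (τ : ℝ), τ ∈ Icc (0:ℝ) T →
      (∫ s in (0:ℝ)..τ, (τ - s) ^ (α - 1) * gext (τ, s) * w s) =
        ∫ s in (0:ℝ)..τ, (τ - s) ^ (α - 1) * K τ s * w s := by
    intro w τ hτ
    apply intervalIntegral.integral_congr
    intro s hs
    rw [uIcc_of_le hτ.1] at hs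
    have hmem : ((τ, s) : ℝ × ℝ) ∈ D := ⟨hs.1, hs.2, hτ.2⟩
    show (τ - s) ^ (α - 1) * gext (τ, s) * w s = (τ - s) ^ (α - 1) * K τ s * w s
    rw [hgK _ hmem]
  obtain ⟨u, ⟨huc, hueq⟩, huniq⟩ := volterra_main hT hα.1 hgc hf
  refine ⟨u, ⟨huc, ?_⟩, ?_⟩
  · intro τ hτ
    rw [← hsame u τ hτ]
    exact hueq τ hτ
  · rintro v ⟨hvc, hveq⟩
    apply huniq
    refine ⟨hvc, ?_⟩
    intro τ hτ
    rw [hsame v τ hτ]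
    exact hveq τ hτ
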